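/- arXiv:2401.14788 — 8 statements merged into one kernel-verified Lean document; each statement's English description precedes it below -/
import Mathlib

section
/- Let γ > 0, n > 0, k > 0, 0 < x₀ < k, and let p satisfy 0 < p < 1 + 1/n with p ≠ 1. Set Aₙ = (k/x₀)ⁿ − 1. Then the function x(t) = k / (1 + [γ n (p−1)(t−t₀) + Aₙ^{1−p}]^{1/(1−p)})^{1/n} (all powers being real powers) satisfies x(t₀) = x₀ and, for every t ≥ t₀ such that γ n (p−1)(t−t₀) + Aₙ^{1−p} > 0, solves the ordinary differential equation x'(t) = γ k^{n(p−1)} x(t)^{1+n(1−p)} [1 − (x(t)/k)ⁿ]^{p}. -/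
open Real

/-- The general growth curve solves the growth ODE. -/
theorem stmt_0 (γ n k x₀ t₀ p : ℝ)
    (hγ : 0 < γ) (hn : 0 < n) (hk : 0 < k) (hx₀ : 0 < x₀) (hx₀k : x₀ < k)
    (hp0 : 0 < p) (hp1 : p < 1 + 1 / n) (hpne : p ≠ 1)
    (A : ℝ) (hA : A = (k / x₀) ^ n - 1)
    (x : ℝ → ℝ)
    (hx : ∀ t, x t =
      k / (1 + (γ * n * (p - 1) * (t - t₀) + A ^ (1 - p)) ^ (1 / (1 - p))) ^ (1 / n)) :
    x t₀ = x₀ ∧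
      ∀ t, t₀ ≤ t → 0 < γ * n * (p - 1) * (t - t₀) + A ^ (1 - p) →
        HasDerivAt x
          (γ * k ^ (n * (p - 1)) * x t ^ (1 + n * (1 - p)) * (1 - (x t / k) ^ n) ^ p) t := by
  have hn' : n ≠ 0 := hn.ne'
  have h1p : (1 : ℝ) - p ≠ 0 := sub_ne_zero.2 (Ne.symm hpne)
  have hkx : 1 < k / x₀ := (one_lt_div hx₀).2 hx₀k
  have hA0 : 0 < A := by
    rw [hA, sub_pos]
    exact (Real.one_lt_rpow_iff_of_pos (by positivity)).2 (Or.inl ⟨hkx, hn⟩)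
  constructor
  · rw [hx t₀]
    simp only [sub_self, mul_zero, zero_mul, zero_add]
    rw [← Real.rpow_mul hA0.le, mul_one_div, div_self h1p, Real.rpow_one]
    rw [show 1 + A = (k / x₀) ^ n by rw [hA]; ring]
    rw [← Real.rpow_mul (by positivity), mul_one_div, div_self hn', Real.rpow_one]
    rw [div_div_eq_mul_div, mul_comm, mul_div_assoc, div_self hk.ne', mul_one]
  · intro t ht hu
    have hv0 : 0 < γ * n * (p - 1) * (t - t₀) + A ^ (1 - p) := hu
    set v : ℝ := γ * n * (p - 1) * (t - t₀) + A ^ (1 - p) with hvdef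
    have hvq : 0 < v ^ (1 / (1 - p)) := Real.rpow_pos_of_pos hv0 _
    have hy0 : 0 < 1 + v ^ (1 / (1 - p)) := by positivity
    set y : ℝ := 1 + v ^ (1 / (1 - p)) with hydef
    have ha0 : 0 < y ^ (1 / n) := Real.rpow_pos_of_pos hy0 _
    -- derivative chain
    have h1 : HasDerivAt (fun s => γ * n * (p - 1) * (s - t₀) + A ^ (1 - p))
        (γ * n * (p - 1)) t := by
      simpa using (((hasDerivAt_id t).sub_const t₀).const_mul (γ * n * (p - 1))).add_const
        (A ^ (1 - p))
    have h2 : HasDerivAt (fun s => (γ * n * (p - 1) * (s - t₀) + A ^ (1 - p)) ^ (1 / (1 - p)))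
        (γ * n * (p - 1) * (1 / (1 - p)) * v ^ (1 / (1 - p) - 1)) t :=
      h1.rpow_const (Or.inl hv0.ne')
    have h3 := h2.const_add 1
    have h4 : HasDerivAt
        (fun s => (1 + (γ * n * (p - 1) * (s - t₀) + A ^ (1 - p)) ^ (1 / (1 - p))) ^ (1 / n))
        ((γ * n * (p - 1) * (1 / (1 - p)) * v ^ (1 / (1 - p) - 1)) * (1 / n) * y ^ (1 / n - 1)) t :=
      h3.rpow_const (Or.inl hy0.ne')
    have h5 := (hasDerivAt_const t k).div h4 ha0.ne'
    have hX := h5.congr_of_eventuallyEq (Filter.Eventually.of_forall fun s => hx s)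
    refine hX.congr_deriv (Eq.symm ?_)
    rw [hx t, ← hvdef, ← hydef]
    have hane : y ^ (1 / n) ≠ 0 := ha0.ne'
    -- simplify (x t / k) ^ n
    rw [show k / y ^ (1 / n) / k = (y ^ (1 / n))⁻¹ by field_simp]
    rw [← Real.rpow_neg hy0.le, ← Real.rpow_mul hy0.le]
    rw [show -(1 / n) * n = (-1 : ℝ) by field_simp, Real.rpow_neg_one]
    rw [show (1 : ℝ) - y⁻¹ = v ^ (1 / (1 - p)) / y by
      rw [hydef]; field_simp; ring]
    rw [Real.div_rpow hvq.le hy0.le, ← Real.rpow_mul hv0.le]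
    rw [Real.div_rpow hk.le ha0.le, ← Real.rpow_mul hy0.le]
    -- exponent arithmetic
    rw [show (1 / (1 - p)) * p = 1 / (1 - p) - 1 by field_simp; ring]
    rw [show (1 / n) * (1 + n * (1 - p)) = 1 / n + (1 - p) by field_simp]
    have hk1 : k ^ (n * (p - 1)) * k ^ (1 + n * (1 - p)) = k := by
      rw [← Real.rpow_add hk, show n * (p - 1) + (1 + n * (1 - p)) = (1 : ℝ) by ring,
        Real.rpow_one]
    have key : γ * k ^ (n * (p - 1)) * (k ^ (1 + n * (1 - p)) / y ^ (1 / n + (1 - p))) *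
        (v ^ (1 / (1 - p) - 1) / y ^ p)
        = γ * k * v ^ (1 / (1 - p) - 1) * (y ^ (1 / n - 1) / (y ^ (1 / n)) ^ 2) := by
      calc γ * k ^ (n * (p - 1)) * (k ^ (1 + n * (1 - p)) / y ^ (1 / n + (1 - p))) *
            (v ^ (1 / (1 - p) - 1) / y ^ p)
          = γ * (k ^ (n * (p - 1)) * k ^ (1 + n * (1 - p))) * v ^ (1 / (1 - p) - 1) /
            (y ^ (1 / n + (1 - p)) * y ^ p) := by ring
        _ = γ * k * v ^ (1 / (1 - p) - 1) / y ^ (1 / n + (1 - p) + p) := by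
            rw [hk1, ← Real.rpow_add hy0]
        _ = γ * k * v ^ (1 / (1 - p) - 1) * (y ^ (1 / n - 1) / (y ^ (1 / n)) ^ 2) := by
            rw [show (1 / n + (1 - p) + p : ℝ) = (1 / n + 1 / n) - (1 / n - 1) by ring,
              Real.rpow_sub hy0, pow_two, ← Real.rpow_add hy0]
            have h1 : y ^ (1 / n + 1 / n) ≠ 0 := (Real.rpow_pos_of_pos hy0 _).ne'
            have h2 : y ^ (1 / n - 1) ≠ 0 := (Real.rpow_pos_of_pos hy0 _).ne'
            field_simp
    rw [key]
    field_simp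
    ring
end

section
/- Under the hypotheses γ > 0, n > 0, k > 0, 0 < x₀ < k, 0 < p < 1 + 1/n with p ≠ 1, Aₙ = (k/x₀)ⁿ − 1, and Aₙ^{1−p} + n γ (1−p) t₀ > 0, define α = exp(−γn), η = [Aₙ^{1−p} + n γ (1−p) t₀]^{1/(p−1)} and g(t) = (η + [1 + η^{1−p} (ln α)(1−p) t]^{1/(1−p)})^{1/n}. Then for every t with 1 + η^{1−p}(ln α)(1−p)t > 0 and Aₙ^{1−p} + γ n (p−1)(t−t₀) > 0, the reparametrized curve satisfies x₀ · g(t₀)/g(t) = k / (1 + [γ n (p−1)(t−t₀) + Aₙ^{1−p}]^{1/(1−p)})^{1/n}. -/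
open Real

/-- The reparametrized curve x₀ · g(t₀)/g(t) coincides with the general growth curve. -/
theorem stmt_2 (γ n k x₀ t₀ p : ℝ)
    (hγ : 0 < γ) (hn : 0 < n) (hk : 0 < k) (hx₀ : 0 < x₀) (hx₀k : x₀ < k)
    (hp0 : 0 < p) (hp1 : p < 1 + 1 / n) (hpne : p ≠ 1)
    (A : ℝ) (hA : A = (k / x₀) ^ n - 1)
    (hpos : 0 < A ^ (1 - p) + n * γ * (1 - p) * t₀)
    (α η : ℝ) (hα : α = Real.exp (-(γ * n)))
    (hη : η = (A ^ (1 - p) + n * γ * (1 - p) * t₀) ^ (1 / (p - 1)))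
    (g : ℝ → ℝ)
    (hg : ∀ t, g t =
      (η + (1 + η ^ (1 - p) * Real.log α * (1 - p) * t) ^ (1 / (1 - p))) ^ (1 / n)) :
    ∀ t, 0 < 1 + η ^ (1 - p) * Real.log α * (1 - p) * t →
      0 < A ^ (1 - p) + γ * n * (p - 1) * (t - t₀) →
      x₀ * (g t₀ / g t) =
        k / (1 + (γ * n * (p - 1) * (t - t₀) + A ^ (1 - p)) ^ (1 / (1 - p))) ^ (1 / n) := by
  intro t h1 h2
  have hxk : 1 < k / x₀ := (one_lt_div hx₀).mpr hx₀k
  have hxk0 : 0 < k / x₀ := lt_trans one_pos hxk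
  have hA0 : 0 < A := by
    rw [hA]
    have : (1:ℝ) < (k / x₀) ^ n := Real.one_lt_rpow_iff_of_pos hxk0 |>.mpr (Or.inl ⟨hxk, hn⟩)
    linarith
  set B := A ^ (1 - p) + n * γ * (1 - p) * t₀ with hB
  have hη0 : 0 < η := by rw [hη]; exact Real.rpow_pos_of_pos hpos _
  have hp1' : p - 1 ≠ 0 := sub_ne_zero.mpr hpne
  have h1p : (1:ℝ) - p ≠ 0 := sub_ne_zero.mpr (Ne.symm hpne)
  have hηpow : η ^ (1 - p) = B⁻¹ := by
    rw [hη, ← Real.rpow_mul hpos.le,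
      show (1 / (p - 1)) * (1 - p) = -1 by field_simp; ring,
      Real.rpow_neg_one]
  have hlogα : Real.log α = -(γ * n) := by rw [hα, Real.log_exp]
  set C := A ^ (1 - p) + γ * n * (p - 1) * (t - t₀) with hC
  have hBinv : B ^ (1 / (1 - p)) = η⁻¹ := by
    rw [hη, show (1 / (1 - p)) = -(1 / (p - 1)) by field_simp; ring,
      Real.rpow_neg hpos.le]
  have key : 1 + η ^ (1 - p) * Real.log α * (1 - p) * t = C / B := by
    rw [hηpow, hlogα]
    field_simp
    ring
  have hA1p : (A ^ (1 - p)) ^ (1 / (1 - p)) = A := by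
    rw [← Real.rpow_mul hA0.le, mul_one_div, div_self h1p, Real.rpow_one]
  have key₀ : 1 + η ^ (1 - p) * Real.log α * (1 - p) * t₀ = A ^ (1 - p) / B := by
    rw [hηpow, hlogα]
    field_simp
    ring
  have hCpow : 0 < C ^ (1 / (1 - p)) := Real.rpow_pos_of_pos h2 _
  have hgt : g t = η ^ (1 / n) * (1 + C ^ (1 / (1 - p))) ^ (1 / n) := by
    rw [hg, key, Real.div_rpow h2.le hpos.le, hBinv, div_eq_mul_inv, inv_inv,
      ← Real.mul_rpow hη0.le (by positivity)]
    congr 1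
    ring
  have hgt₀ : g t₀ = η ^ (1 / n) * (k / x₀) := by
    have h1A : 1 + A = (k / x₀) ^ n := by rw [hA]; ring
    rw [hg, key₀, Real.div_rpow (Real.rpow_nonneg hA0.le _) hpos.le, hBinv,
      div_eq_mul_inv, inv_inv, hA1p, show η + A * η = η * (1 + A) by ring,
      Real.mul_rpow hη0.le (by linarith), h1A, ← Real.rpow_mul hxk0.le,
      mul_one_div, div_self hn.ne', Real.rpow_one]
  have hRC : γ * n * (p - 1) * (t - t₀) + A ^ (1 - p) = C := by rw [hC]; ring
  rw [hgt, hgt₀, hRC]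
  have hηn : (0:ℝ) < η ^ (1 / n) := Real.rpow_pos_of_pos hη0 _
  have hD : (0:ℝ) < (1 + C ^ (1 / (1 - p))) ^ (1 / n) :=
    Real.rpow_pos_of_pos (by positivity) _
  field_simp
end

section
/- Let σ > 0, y > 0, τ ∈ ℝ, and let g be differentiable and strictly positive on an open interval I with τ ∈ I. Define h(t) = −g'(t)/g(t), M_L(t) = ln y + ln(g(τ)/g(t)) − (σ²/2)(t−τ), and for t ∈ I with t > τ and x > 0, f_L(x,t) = (1/(x √(2πσ²(t−τ)))) · exp(−(ln x − M_L(t))²/(2σ²(t−τ))). Then f_L satisfies the Fokker–Planck equation of the lognormal process with drift h(t)x and infinitesimal variance σ²x²: for all t ∈ I with t > τ and all x > 0, ∂f_L/∂t (x,t) = −∂/∂x [h(t)·x·f_L(x,t)] + (σ²/2) ∂²/∂x² [x²·f_L(x,t)]. -/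
open Real

/-- The lognormal transition density of the multiplicative-noise process satisfies the
Fokker–Planck equation with drift h(t)x and infinitesimal variance σ²x². -/
theorem stmt_6 (a b σ y τ : ℝ) (hσ : 0 < σ) (hy : 0 < y) (hτ : τ ∈ Set.Ioo a b)
    (g : ℝ → ℝ)
    (hgdiff : ∀ t ∈ Set.Ioo a b, DifferentiableAt ℝ g t)
    (hgpos : ∀ t ∈ Set.Ioo a b, 0 < g t)
    (h M : ℝ → ℝ) (fL : ℝ → ℝ → ℝ)
    (hh : ∀ t, h t = -(deriv g t) / g t)
    (hM : ∀ t, M t = Real.log y + Real.log (g τ / g t) - σ ^ 2 / 2 * (t - τ))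
    (hf : ∀ x t, fL x t =
      1 / (x * Real.sqrt (2 * Real.pi * σ ^ 2 * (t - τ))) *
        Real.exp (-(Real.log x - M t) ^ 2 / (2 * σ ^ 2 * (t - τ)))) :
    ∀ t ∈ Set.Ioo a b, τ < t → ∀ x : ℝ, 0 < x →
      deriv (fun t' => fL x t') t =
        -(deriv (fun x' => h t * x' * fL x' t) x) +
          σ ^ 2 / 2 * deriv (deriv (fun x' => x' ^ 2 * fL x' t)) x := by
  intro t ht htτ x hx
  obtain ⟨hta, htb⟩ := ht
  have hπ := Real.pi_pos
  have hgt := hgpos t ⟨hta, htb⟩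
  have hgτ := hgpos τ hτ
  have hs : (0:ℝ) < t - τ := sub_pos.mpr htτ
  have hcpos : 0 < Real.sqrt (2 * Real.pi * σ ^ 2 * (t - τ)) := Real.sqrt_pos.mpr (by positivity)
  have hDpos : (0:ℝ) < 2 * σ ^ 2 * (t - τ) := by positivity
  -- derivative of M at t
  have hM' : HasDerivAt M (-(deriv g t / g t) - σ ^ 2 / 2) t := by
    have hbase : HasDerivAt (fun t' => Real.log y + (Real.log (g τ) - Real.log (g t')) -
        σ ^ 2 / 2 * (t' - τ)) (-(deriv g t / g t) - σ ^ 2 / 2) t := by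
      have hlog : HasDerivAt (fun t' => Real.log (g t')) (deriv g t / g t) t :=
        ((hgdiff t ⟨hta, htb⟩).hasDerivAt).log (ne_of_gt hgt)
      have := ((hasDerivAt_const t (Real.log y)).add
          ((hasDerivAt_const t (Real.log (g τ))).sub hlog)).sub
        (((hasDerivAt_id t).sub_const τ).const_mul (σ ^ 2 / 2))
      refine this.congr_deriv ?_
      ring
    apply hbase.congr_of_eventuallyEq
    filter_upwards [Ioo_mem_nhds hta htb] with t' ht'
    rw [hM, Real.log_div (ne_of_gt hgτ) (ne_of_gt (hgpos t' ht'))]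
  set Mv : ℝ := -(deriv g t / g t) - σ ^ 2 / 2 with hMv
  -- rewrite fL explicitly everywhere
  simp only [hf]
  -- time derivative
  have hlin : HasDerivAt (fun t' => 2 * Real.pi * σ ^ 2 * (t' - τ)) (2 * Real.pi * σ ^ 2) t := by
    simpa using ((hasDerivAt_id t).sub_const τ).const_mul (2 * Real.pi * σ ^ 2)
  have hsq : HasDerivAt (fun t' => Real.sqrt (2 * Real.pi * σ ^ 2 * (t' - τ)))
      (1 / (2 * Real.sqrt (2 * Real.pi * σ ^ 2 * (t - τ))) * (2 * Real.pi * σ ^ 2)) t :=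
    (Real.hasDerivAt_sqrt (by positivity)).comp t hlin
  have hinv : HasDerivAt (fun t' => 1 / (x * Real.sqrt (2 * Real.pi * σ ^ 2 * (t' - τ))))
      (-(x * (1 / (2 * Real.sqrt (2 * Real.pi * σ ^ 2 * (t - τ))) * (2 * Real.pi * σ ^ 2))) /
        (x * Real.sqrt (2 * Real.pi * σ ^ 2 * (t - τ))) ^ 2) t := by
    simpa [one_div, Pi.inv_def] using (hsq.const_mul x).inv (by positivity)
  have hden : HasDerivAt (fun t' => 2 * σ ^ 2 * (t' - τ)) (2 * σ ^ 2) t := by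
    simpa using ((hasDerivAt_id t).sub_const τ).const_mul (2 * σ ^ 2)
  have hnum : HasDerivAt (fun t' => -(Real.log x - M t') ^ 2)
      (-((2:ℕ) * (Real.log x - M t) ^ 1 * (0 - Mv))) t :=
    (((hasDerivAt_const t (Real.log x)).sub hM').pow 2).neg
  have hT := hinv.mul ((hnum.div hden (by positivity)).exp)
  rw [show (x * Real.sqrt (2 * Real.pi * σ ^ 2 * (t - τ))) ^ 2 =
      x ^ 2 * (2 * Real.pi * σ ^ 2 * (t - τ)) by
    rw [mul_pow, Real.sq_sqrt (by positivity : (0:ℝ) ≤ 2 * Real.pi * σ ^ 2 * (t - τ))]] at hT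
  simp only [Pi.div_apply] at hT
  rw [HasDerivAt.deriv (f := fun t' => 1 / (x * Real.sqrt (2 * Real.pi * σ ^ 2 * (t' - τ))) *
      Real.exp (-(Real.log x - M t') ^ 2 / (2 * σ ^ 2 * (t' - τ)))) hT]
  -- space derivatives: abbreviations
  have hEx : ∀ z : ℝ, 0 < z → HasDerivAt
      (fun w => Real.exp (-(Real.log w - M t) ^ 2 / (2 * σ ^ 2 * (t - τ))))
      (Real.exp (-(Real.log z - M t) ^ 2 / (2 * σ ^ 2 * (t - τ))) *
        (-((2:ℕ) * (Real.log z - M t) ^ 1 * z⁻¹) / (2 * σ ^ 2 * (t - τ)))) z := by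
    intro z hz
    exact ((((Real.hasDerivAt_log hz.ne').sub_const (M t)).pow 2).neg.div_const
      (2 * σ ^ 2 * (t - τ))).exp
  -- first-order spatial term
  have hA : HasDerivAt (fun x' => h t * x' *
      (1 / (x' * Real.sqrt (2 * Real.pi * σ ^ 2 * (t - τ))) *
        Real.exp (-(Real.log x' - M t) ^ 2 / (2 * σ ^ 2 * (t - τ)))))
      (h t * (1 / Real.sqrt (2 * Real.pi * σ ^ 2 * (t - τ)) *
        (Real.exp (-(Real.log x - M t) ^ 2 / (2 * σ ^ 2 * (t - τ))) *
          (-((2:ℕ) * (Real.log x - M t) ^ 1 * x⁻¹) / (2 * σ ^ 2 * (t - τ)))))) x := by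
    apply HasDerivAt.congr_of_eventuallyEq
      (((hEx x hx).const_mul (1 / Real.sqrt (2 * Real.pi * σ ^ 2 * (t - τ)))).const_mul (h t))
    filter_upwards [Ioi_mem_nhds hx] with z hz
    have hz0 : z ≠ 0 := ne_of_gt hz
    field_simp
  rw [hA.deriv]
  -- second-order spatial term
  set G : ℝ → ℝ := fun x' => 1 / Real.sqrt (2 * Real.pi * σ ^ 2 * (t - τ)) *
      (x' * Real.exp (-(Real.log x' - M t) ^ 2 / (2 * σ ^ 2 * (t - τ)))) with hG
  set ψ : ℝ → ℝ := fun z => 1 / Real.sqrt (2 * Real.pi * σ ^ 2 * (t - τ)) *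
      (Real.exp (-(Real.log z - M t) ^ 2 / (2 * σ ^ 2 * (t - τ))) *
        (1 - 2 * (Real.log z - M t) / (2 * σ ^ 2 * (t - τ)))) with hψdef
  have hGeq : (fun x' => x' ^ 2 * (1 / (x' * Real.sqrt (2 * Real.pi * σ ^ 2 * (t - τ))) *
      Real.exp (-(Real.log x' - M t) ^ 2 / (2 * σ ^ 2 * (t - τ))))) = G := by
    funext z
    rcases eq_or_ne z 0 with hz | hz
    · simp [G, hz]
    · simp only [G]; field_simp
  have hGz : ∀ z : ℝ, 0 < z → HasDerivAt G (ψ z) z := by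
    intro z hz
    have hraw : HasDerivAt G (1 / Real.sqrt (2 * Real.pi * σ ^ 2 * (t - τ)) *
        (1 * Real.exp (-(Real.log z - M t) ^ 2 / (2 * σ ^ 2 * (t - τ))) +
          z * (Real.exp (-(Real.log z - M t) ^ 2 / (2 * σ ^ 2 * (t - τ))) *
            (-((2:ℕ) * (Real.log z - M t) ^ 1 * z⁻¹) / (2 * σ ^ 2 * (t - τ)))))) z :=
      ((hasDerivAt_id z).mul (hEx z hz)).const_mul _
    convert hraw using 1
    simp only [ψ]
    have hz0 : z ≠ 0 := ne_of_gt hz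
    field_simp
    ring
  have hev : deriv G =ᶠ[nhds x] ψ := by
    filter_upwards [Ioi_mem_nhds hx] with z hz
    exact (hGz z hz).deriv
  have hψ : HasDerivAt ψ
      (1 / Real.sqrt (2 * Real.pi * σ ^ 2 * (t - τ)) *
        (Real.exp (-(Real.log x - M t) ^ 2 / (2 * σ ^ 2 * (t - τ))) *
            (-((2:ℕ) * (Real.log x - M t) ^ 1 * x⁻¹) / (2 * σ ^ 2 * (t - τ))) *
          (1 - 2 * (Real.log x - M t) / (2 * σ ^ 2 * (t - τ))) +
          Real.exp (-(Real.log x - M t) ^ 2 / (2 * σ ^ 2 * (t - τ))) *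
            (-(2 * x⁻¹ / (2 * σ ^ 2 * (t - τ)))))) x := by
    have h2 : HasDerivAt (fun z => 1 - 2 * (Real.log z - M t) / (2 * σ ^ 2 * (t - τ)))
        (-(2 * x⁻¹ / (2 * σ ^ 2 * (t - τ)))) x :=
      ((((Real.hasDerivAt_log hx.ne').sub_const (M t)).const_mul 2).div_const
        (2 * σ ^ 2 * (t - τ))).const_sub 1
    exact ((hEx x hx).mul h2).const_mul _
  rw [hGeq, Filter.EventuallyEq.deriv_eq hev, hψ.deriv]
  -- final algebra
  rw [hh, hMv]
  have hσ0 : σ ≠ 0 := ne_of_gt hσ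
  have hx0 : x ≠ 0 := ne_of_gt hx
  have hs0 : (t - τ) ≠ 0 := ne_of_gt hs
  have hπ0 : Real.pi ≠ 0 := ne_of_gt hπ
  have hc0 : Real.sqrt (2 * Real.pi * σ ^ 2 * (t - τ)) ≠ 0 := ne_of_gt hcpos
  have hg0 : g t ≠ 0 := ne_of_gt hgt
  push_cast
  field_simp
  ring
end

section
/- Let m, k₁, k₂ be real C¹ functions on an interval T with k₂(t) ≠ 0 on T, and suppose r(t) = k₁(t)/k₂(t) is strictly increasing on T. For τ < t in T, let f[x,t|y,τ] denote the Gaussian density in x with mean m(t) + (k₂(t)/k₂(τ))(y − m(τ)) and variance k₂(t)(k₁(t) − (k₂(t)/k₂(τ)) k₁(τ)) (which is positive), and for a differentiable boundary s define Ψ[s(t),t|y,τ] = { (s'(t)−m'(t))/2 − ((s(t)−m(t))/2)·(k₁'(t)k₂(τ)−k₂'(t)k₁(τ))/(k₁(t)k₂(τ)−k₂(t)k₁(τ)) − ((y−m(τ))/2)·(k₂'(t)k₁(t)−k₂(t)k₁'(t))/(k₁(t)k₂(τ)−k₂(t)k₁(τ)) } · f[s(t),t|y,τ]. Then for every d₁,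 d₂ ∈ ℝ, the boundary s̃(t) = m(t) + d₁ k₁(t) + d₂ k₂(t) satisfies Ψ[s̃(t),t|s̃(τ),τ] = 0 for all τ, t ∈ T with τ < t. -/
open Real

/-- For boundaries of the form s̃(t) = m(t) + d₁k₁(t) + d₂k₂(t), the Volterra kernel Ψ
vanishes along the boundary: Ψ[s̃(t),t|s̃(τ),τ] = 0. -/
theorem stmt_12 (a b : ℝ) (m k₁ k₂ : ℝ → ℝ)
    (hm : ContDiffOn ℝ 1 m (Set.Ioo a b))
    (hk₁ : ContDiffOn ℝ 1 k₁ (Set.Ioo a b))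
    (hk₂ : ContDiffOn ℝ 1 k₂ (Set.Ioo a b))
    (hk₂ne : ∀ t ∈ Set.Ioo a b, k₂ t ≠ 0)
    (hr : StrictMonoOn (fun t => k₁ t / k₂ t) (Set.Ioo a b))
    (f : ℝ → ℝ → ℝ → ℝ → ℝ)
    (hf : ∀ x t y τ, f x t y τ =
      1 / Real.sqrt (2 * Real.pi * (k₂ t * (k₁ t - k₂ t / k₂ τ * k₁ τ))) *
        Real.exp (-(x - (m t + k₂ t / k₂ τ * (y - m τ))) ^ 2 /
          (2 * (k₂ t * (k₁ t - k₂ t / k₂ τ * k₁ τ)))))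
    (Ψ : (ℝ → ℝ) → ℝ → ℝ → ℝ → ℝ)
    (hΨ : ∀ s : ℝ → ℝ, ∀ t y τ, Ψ s t y τ =
      ((deriv s t - deriv m t) / 2 -
        (s t - m t) / 2 *
          ((deriv k₁ t * k₂ τ - deriv k₂ t * k₁ τ) / (k₁ t * k₂ τ - k₂ t * k₁ τ)) -
        (y - m τ) / 2 *
          ((deriv k₂ t * k₁ t - k₂ t * deriv k₁ t) / (k₁ t * k₂ τ - k₂ t * k₁ τ))) *
        f (s t) t y τ) :
    ∀ d₁ d₂ : ℝ, ∀ τ ∈ Set.Ioo a b, ∀ t ∈ Set.Ioo a b, τ < t →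
      Ψ (fun u => m u + d₁ * k₁ u + d₂ * k₂ u) t
        (m τ + d₁ * k₁ τ + d₂ * k₂ τ) τ = 0 := by
  intro d₁ d₂ τ hτ t ht hτt
  have hmem : Set.Ioo a b ∈ nhds t := isOpen_Ioo.mem_nhds ht
  have hmd : DifferentiableAt ℝ m t :=
    ((hm.contDiffAt hmem).differentiableAt one_ne_zero)
  have hk₁d : DifferentiableAt ℝ k₁ t :=
    ((hk₁.contDiffAt hmem).differentiableAt one_ne_zero)
  have hk₂d : DifferentiableAt ℝ k₂ t :=
    ((hk₂.contDiffAt hmem).differentiableAt one_ne_zero)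
  have hds : deriv (fun u => m u + d₁ * k₁ u + d₂ * k₂ u) t =
      deriv m t + d₁ * deriv k₁ t + d₂ * deriv k₂ t := by
    exact ((hmd.hasDerivAt.add (hk₁d.hasDerivAt.const_mul d₁)).add
      (hk₂d.hasDerivAt.const_mul d₂)).deriv
  have hD : k₁ t * k₂ τ - k₂ t * k₁ τ ≠ 0 := by
    have hne : k₁ τ / k₂ τ ≠ k₁ t / k₂ t := ne_of_lt (hr hτ ht hτt)
    intro h
    apply hne
    field_simp [hk₂ne τ hτ, hk₂ne t ht]
    linarith [h]
  rw [hΨ]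
  simp only [hds]
  have : (deriv m t + d₁ * deriv k₁ t + d₂ * deriv k₂ t - deriv m t) / 2 -
      (m t + d₁ * k₁ t + d₂ * k₂ t - m t) / 2 *
        ((deriv k₁ t * k₂ τ - deriv k₂ t * k₁ τ) / (k₁ t * k₂ τ - k₂ t * k₁ τ)) -
      (m τ + d₁ * k₁ τ + d₂ * k₂ τ - m τ) / 2 *
        ((deriv k₂ t * k₁ t - k₂ t * deriv k₁ t) / (k₁ t * k₂ τ - k₂ t * k₁ τ)) = 0 := by
    field_simp
    ring
  rw [this, zero_mul]
end

section
/- Let m, k₁, k₂ be real C¹ functions on an interval T with k₂(t) ≠ 0 on T and r(t) = k₁(t)/k₂(t) strictly increasing on T. For τ < t in T, let f[x,t|y,τ] denote the Gaussian density in x with mean m(t) + (k₂(t)/k₂(τ))(y − m(τ)) and variance k₂(t)(k₁(t) − (k₂(t)/k₂(τ)) k₁(τ)), and define Ψ as the Volterra kernel Ψ[s(t),t|y,τ] = { (s'(t)−m'(t))/2 − ((s(t)−m(t))/2)·(k₁'(t)k₂(τ)−k₂'(t)k₁(τ))/(k₁(t)k₂(τ)−k₂(t)k₁(τ)) − ((y−m(τ))/2)·(k₂'(t)k₁(t)−k₂(t)k₁'(t))/(k₁(t)k₂(τ)−k₂(t)k₁(τ))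 } · f[s(t),t|y,τ]. Fix t₀ ∈ T, d₁, d₂ ∈ ℝ and set s̃(t) = m(t) + d₁ k₁(t) + d₂ k₂(t). Then for every x₀ with x₀ < s̃(t₀) and every t ∈ T with t > t₀, −2 Ψ[s̃(t),t|x₀,t₀] = ((s̃(t₀) − x₀)/(r(t) − r(t₀))) · (k₂(t)/k₂(t₀)) · r'(t) · f[s̃(t),t|x₀,t₀]; that is, the free term of the Volterra equation equals the closed-form first-passage-time density g[s̃(t),t|x₀,t₀]. -/
open Real

/-- For boundaries s̃(t) = m(t) + d₁k₁(t) + d₂k₂(t), the free term −2Ψ of the Volterra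
equation equals the closed-form first-passage-time density. -/
theorem stmt_13 (a b : ℝ) (m k₁ k₂ : ℝ → ℝ)
    (hm : ContDiffOn ℝ 1 m (Set.Ioo a b))
    (hk₁ : ContDiffOn ℝ 1 k₁ (Set.Ioo a b))
    (hk₂ : ContDiffOn ℝ 1 k₂ (Set.Ioo a b))
    (hk₂ne : ∀ t ∈ Set.Ioo a b, k₂ t ≠ 0)
    (r : ℝ → ℝ) (hrdef : ∀ t, r t = k₁ t / k₂ t)
    (hr : StrictMonoOn r (Set.Ioo a b))
    (f : ℝ → ℝ → ℝ → ℝ → ℝ)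
    (hf : ∀ x t y τ, f x t y τ =
      1 / Real.sqrt (2 * Real.pi * (k₂ t * (k₁ t - k₂ t / k₂ τ * k₁ τ))) *
        Real.exp (-(x - (m t + k₂ t / k₂ τ * (y - m τ))) ^ 2 /
          (2 * (k₂ t * (k₁ t - k₂ t / k₂ τ * k₁ τ)))))
    (Ψ : (ℝ → ℝ) → ℝ → ℝ → ℝ → ℝ)
    (hΨ : ∀ s : ℝ → ℝ, ∀ t y τ, Ψ s t y τ =
      ((deriv s t - deriv m t) / 2 -
        (s t - m t) / 2 *
          ((deriv k₁ t * k₂ τ - deriv k₂ t * k₁ τ) / (k₁ t * k₂ τ - k₂ t * k₁ τ)) -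
        (y - m τ) / 2 *
          ((deriv k₂ t * k₁ t - k₂ t * deriv k₁ t) / (k₁ t * k₂ τ - k₂ t * k₁ τ))) *
        f (s t) t y τ)
    (t₀ : ℝ) (ht₀ : t₀ ∈ Set.Ioo a b) (d₁ d₂ : ℝ)
    (s : ℝ → ℝ) (hs : ∀ t, s t = m t + d₁ * k₁ t + d₂ * k₂ t) :
    ∀ x₀ : ℝ, x₀ < s t₀ → ∀ t ∈ Set.Ioo a b, t₀ < t →
      -2 * Ψ s t x₀ t₀ =
        (s t₀ - x₀) / (r t - r t₀) * (k₂ t / k₂ t₀) * deriv r t * f (s t) t x₀ t₀ := by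

  intro x₀ hx₀ t ht htt
  have hk₂t : k₂ t ≠ 0 := hk₂ne t ht
  have hk₂τ : k₂ t₀ ≠ 0 := hk₂ne t₀ ht₀
  -- differentiability
  have hdm : DifferentiableAt ℝ m t :=
    ((hm.differentiableOn one_ne_zero) t ht).differentiableAt (isOpen_Ioo.mem_nhds ht)
  have hd1 : DifferentiableAt ℝ k₁ t :=
    ((hk₁.differentiableOn one_ne_zero) t ht).differentiableAt (isOpen_Ioo.mem_nhds ht)
  have hd2 : DifferentiableAt ℝ k₂ t :=
    ((hk₂.differentiableOn one_ne_zero) t ht).differentiableAt (isOpen_Ioo.mem_nhds ht)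
  -- deriv s
  have hseq : s = fun u => m u + d₁ * k₁ u + d₂ * k₂ u := funext hs
  have hds : deriv s t = deriv m t + d₁ * deriv k₁ t + d₂ * deriv k₂ t := by
    rw [hseq]
    exact (((hdm.hasDerivAt.add ((hd1.hasDerivAt).const_mul d₁)).add
      ((hd2.hasDerivAt).const_mul d₂))).deriv
  -- deriv r
  have hreq : r = fun u => k₁ u / k₂ u := funext hrdef
  have hdr : deriv r t = (deriv k₁ t * k₂ t - k₁ t * deriv k₂ t) / (k₂ t) ^ 2 := by
    rw [hreq]
    exact ((hd1.hasDerivAt.div hd2.hasDerivAt hk₂t)).deriv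
  -- nonvanishing of r t - r t₀ and the determinant
  have hrne : r t - r t₀ ≠ 0 := sub_ne_zero.mpr (ne_of_gt (hr ht₀ ht htt))
  have hDeq : k₁ t * k₂ t₀ - k₂ t * k₁ t₀ = k₂ t * k₂ t₀ * (r t - r t₀) := by
    rw [hrdef, hrdef]; field_simp
  have hD : k₁ t * k₂ t₀ - k₂ t * k₁ t₀ ≠ 0 := by
    rw [hDeq]; exact mul_ne_zero (mul_ne_zero hk₂t hk₂τ) hrne
  rw [hΨ, hds, hdr, hs t, hs t₀]
  rw [show r t - r t₀ = (k₁ t * k₂ t₀ - k₂ t * k₁ t₀) / (k₂ t * k₂ t₀) by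
    rw [hDeq]; field_simp]
  field_simp
  ring
end

section
/- Let σ > 0, t > t₀, c₁ < c₂, set Δ = t − t₀, d = c₂ − c₁ and c = (c₁ + c₂)/2. Then the bilateral series (1/√(2πσ²Δ³)) · Σ_{n ∈ ℤ} exp(−2n²d²/(σ²Δ)) · { (c − c₁ + 2nd)·exp(−2nd(c−c₁)/(σ²Δ))·exp(−(c₁−c)²/(2σ²Δ)) + (c₂ − c − 2nd)·exp(2nd(c₂−c)/(σ²Δ))·exp(−(c₂−c)²/(2σ²Δ)) } converges and equals (d/√(2πσ²Δ³)) · exp(−d²/(8σ²Δ)) · { 1 + Σ_{n ≥ 1} exp(−2n²d²/(σ²Δ)) · [ (1 + 4n)·exp(−n d²/(σ²Δ)) + (1 − 4n)·exp(n d²/(σ²Δ)) ] }. -/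
open Real

noncomputable def gg (k : ℝ) (n : ℤ) : ℝ :=
  (1/2 + 2*(n:ℝ)) * Real.exp (-2*(n:ℝ)^2*k - (n:ℝ)*k)
    + (1/2 - 2*(n:ℝ)) * Real.exp (-2*(n:ℝ)^2*k + (n:ℝ)*k)

lemma gg_neg (k : ℝ) (n : ℤ) : gg k (-n) = gg k n := by
  simp [gg]
  ring_nf

lemma gg_summable (k : ℝ) (hk : 0 < k) :
    Summable (fun n : ℕ => gg k ((n:ℤ) + 1)) := by
  have hr : ‖Real.exp (-k)‖ < 1 := by
    rw [Real.norm_eq_abs, abs_of_pos (Real.exp_pos _)]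
    exact Real.exp_lt_one_iff.mpr (by linarith)
  have hmaj : Summable (fun n : ℕ => (5 + 4*(n:ℝ)) * Real.exp (-k) ^ n) := by
    have h1 := summable_pow_mul_geometric_of_norm_lt_one (R := ℝ) 1 hr
    have h0 := summable_pow_mul_geometric_of_norm_lt_one (R := ℝ) 0 hr
    simpa using ((h0.mul_left 5).add (h1.mul_left 4)).congr (fun n => by push_cast; ring)
  apply Summable.of_norm_bounded hmaj
  intro n
  set m : ℝ := (n:ℝ) + 1 with hm
  have hm1 : 1 ≤ m := by rw [hm]; linarith [Nat.cast_nonneg (α := ℝ) n]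
  have hgg : gg k ((n:ℤ)+1) = (1/2 + 2*m) * Real.exp (-2*m^2*k - m*k)
      + (1/2 - 2*m) * Real.exp (-2*m^2*k + m*k) := by
    simp only [gg, hm]; push_cast; ring_nf
  rw [hgg]
  have he1 : Real.exp (-2*m^2*k - m*k) ≤ Real.exp (-k) ^ n := by
    rw [← Real.exp_nat_mul]
    apply Real.exp_le_exp.mpr
    nlinarith [sq_nonneg m, mul_pos hk (by linarith : (0:ℝ) < m)]
  have he2 : Real.exp (-2*m^2*k + m*k) ≤ Real.exp (-k) ^ n := by
    rw [← Real.exp_nat_mul]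
    apply Real.exp_le_exp.mpr
    have : (n:ℝ) = m - 1 := by simp [hm]
    rw [this]
    nlinarith [mul_pos hk (by linarith : (0:ℝ) < m)]
  have hpos : 0 < Real.exp (-k) ^ n := pow_pos (Real.exp_pos _) n
  calc ‖(1/2 + 2*m) * Real.exp (-2*m^2*k - m*k) + (1/2 - 2*m) * Real.exp (-2*m^2*k + m*k)‖
      ≤ (1/2 + 2*m) * Real.exp (-2*m^2*k - m*k) + (2*m - 1/2) * Real.exp (-2*m^2*k + m*k) := by
        rw [Real.norm_eq_abs]
        have h1 : 0 ≤ (1/2 + 2*m) * Real.exp (-2*m^2*k - m*k) := by positivity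
        have h2 : 0 < Real.exp (-2*m^2*k + m*k) := Real.exp_pos _
        rw [abs_le]
        constructor <;> nlinarith
    _ ≤ (1/2 + 2*m) * Real.exp (-k)^n + (2*m - 1/2) * Real.exp (-k)^n := by
        gcongr <;> linarith
    _ ≤ (5 + 4*(n:ℝ)) * Real.exp (-k) ^ n := by
        have : (n:ℝ) = m - 1 := by simp [hm]
        rw [this]; nlinarith

lemma gg_hasSum (k : ℝ) (hk : 0 < k) :
    HasSum (gg k) (1 + 2 * ∑' n : ℕ, gg k ((n:ℤ) + 1)) := by
  set G := ∑' n : ℕ, gg k ((n:ℤ) + 1) with hG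
  have hGsum : HasSum (fun n : ℕ => gg k ((n:ℤ) + 1)) G := (gg_summable k hk).hasSum
  have h0 : gg k 0 = 1 := by norm_num [gg]
  have hpos : HasSum (fun n : ℕ => gg k (n:ℤ)) (1 + G) := by
    refine (hasSum_nat_add_iff' 1).mp ?_
    have : ((1 : ℝ) + G) - ∑ i ∈ Finset.range 1, gg k (i:ℤ) = G := by
      simp [h0]
    rw [this]
    exact hGsum.congr_fun (fun n => by push_cast; ring_nf)
  have hneg : HasSum (fun n : ℕ => gg k (-((n:ℤ) + 1))) G := by
    refine hGsum.congr_fun (fun n => ?_)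
    rw [gg_neg]
  have := hpos.of_nat_of_neg_add_one hneg
  convert this using 1
  ring

/-- The bilateral series for the first-exit-time density of a Wiener process from a strip
with constant boundaries, started at the midpoint, converges and equals its simplified
one-sided-series form. -/
theorem stmt_14 (σ t t₀ c₁ c₂ : ℝ) (hσ : 0 < σ) (ht : t₀ < t) (hc : c₁ < c₂)
    (Δ d c : ℝ) (hΔ : Δ = t - t₀) (hd : d = c₂ - c₁) (hc' : c = (c₁ + c₂) / 2) :
    HasSum
      (fun n : ℤ =>
        1 / Real.sqrt (2 * Real.pi * σ ^ 2 * Δ ^ 3) *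
          (Real.exp (-2 * (n : ℝ) ^ 2 * d ^ 2 / (σ ^ 2 * Δ)) *
            ((c - c₁ + 2 * (n : ℝ) * d) *
                Real.exp (-2 * (n : ℝ) * d * (c - c₁) / (σ ^ 2 * Δ)) *
                Real.exp (-(c₁ - c) ^ 2 / (2 * σ ^ 2 * Δ)) +
              (c₂ - c - 2 * (n : ℝ) * d) *
                Real.exp (2 * (n : ℝ) * d * (c₂ - c) / (σ ^ 2 * Δ)) *
                Real.exp (-(c₂ - c) ^ 2 / (2 * σ ^ 2 * Δ)))))
      (d / Real.sqrt (2 * Real.pi * σ ^ 2 * Δ ^ 3) *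
        Real.exp (-d ^ 2 / (8 * σ ^ 2 * Δ)) *
        (1 + ∑' n : ℕ,
          Real.exp (-2 * ((n : ℝ) + 1) ^ 2 * d ^ 2 / (σ ^ 2 * Δ)) *
            ((1 + 4 * ((n : ℝ) + 1)) *
                Real.exp (-((n : ℝ) + 1) * d ^ 2 / (σ ^ 2 * Δ)) +
              (1 - 4 * ((n : ℝ) + 1)) *
                Real.exp (((n : ℝ) + 1) * d ^ 2 / (σ ^ 2 * Δ))))) := by
  have hΔpos : 0 < Δ := by rw [hΔ]; linarith
  have hdpos : 0 < d := by rw [hd]; linarith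
  set k : ℝ := d ^ 2 / (σ ^ 2 * Δ) with hk
  have hkpos : 0 < k := by positivity
  set C : ℝ := d / Real.sqrt (2 * Real.pi * σ ^ 2 * Δ ^ 3) *
      Real.exp (-d ^ 2 / (8 * σ ^ 2 * Δ)) with hC
  have hc1 : c - c₁ = d / 2 := by rw [hc', hd]; ring
  have hc2 : c₂ - c = d / 2 := by rw [hc', hd]; ring
  have hc3 : c₁ - c = -(d / 2) := by rw [hc', hd]; ring
  have hmerge : ∀ a b e x : ℝ, Real.exp a * (x * Real.exp b * Real.exp e)
      = x * Real.exp (a + b + e) := by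
    intro a b e x; rw [Real.exp_add, Real.exp_add]; ring
  have hmerge2 : ∀ A e x u : ℝ, (A * Real.exp e) * (x * Real.exp u)
      = A * x * Real.exp (e + u) := by
    intro A e x u; rw [Real.exp_add]; ring
  have hmerge3 : ∀ a b x : ℝ, Real.exp a * (x * Real.exp b) = x * Real.exp (a + b) := by
    intro a b x; rw [Real.exp_add]; ring
  have key := (gg_hasSum k hkpos).mul_left C
  have hfun : (fun n : ℤ =>
        1 / Real.sqrt (2 * Real.pi * σ ^ 2 * Δ ^ 3) *
          (Real.exp (-2 * (n : ℝ) ^ 2 * d ^ 2 / (σ ^ 2 * Δ)) *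
            ((c - c₁ + 2 * (n : ℝ) * d) *
                Real.exp (-2 * (n : ℝ) * d * (c - c₁) / (σ ^ 2 * Δ)) *
                Real.exp (-(c₁ - c) ^ 2 / (2 * σ ^ 2 * Δ)) +
              (c₂ - c - 2 * (n : ℝ) * d) *
                Real.exp (2 * (n : ℝ) * d * (c₂ - c) / (σ ^ 2 * Δ)) *
                Real.exp (-(c₂ - c) ^ 2 / (2 * σ ^ 2 * Δ)))))
      = fun n : ℤ => C * gg k n := by
    funext n
    rw [hc1, hc2, hc3]
    simp only [gg, hC, hk, mul_add, hmerge, hmerge2]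
    ring_nf
  rw [hfun]
  have hval : d / Real.sqrt (2 * Real.pi * σ ^ 2 * Δ ^ 3) *
        Real.exp (-d ^ 2 / (8 * σ ^ 2 * Δ)) *
        (1 + ∑' n : ℕ,
          Real.exp (-2 * ((n : ℝ) + 1) ^ 2 * d ^ 2 / (σ ^ 2 * Δ)) *
            ((1 + 4 * ((n : ℝ) + 1)) *
                Real.exp (-((n : ℝ) + 1) * d ^ 2 / (σ ^ 2 * Δ)) +
              (1 - 4 * ((n : ℝ) + 1)) *
                Real.exp (((n : ℝ) + 1) * d ^ 2 / (σ ^ 2 * Δ))))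
      = C * (1 + 2 * ∑' n : ℕ, gg k ((n:ℤ) + 1)) := by
    rw [hC]
    congr 1
    have hpt : ∀ n : ℕ,
        Real.exp (-2 * ((n : ℝ) + 1) ^ 2 * d ^ 2 / (σ ^ 2 * Δ)) *
            ((1 + 4 * ((n : ℝ) + 1)) *
                Real.exp (-((n : ℝ) + 1) * d ^ 2 / (σ ^ 2 * Δ)) +
              (1 - 4 * ((n : ℝ) + 1)) *
                Real.exp (((n : ℝ) + 1) * d ^ 2 / (σ ^ 2 * Δ)))
        = 2 * gg k ((n:ℤ) + 1) := by
      intro n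
      simp only [gg, hk, mul_add, hmerge3]
      push_cast
      ring_nf
    rw [tsum_congr hpt, tsum_mul_left]
  rw [hval]
  exact key
end

section
/- Let γ > 0, n > 0, k > 0, 0 < x₀ < k, and let p satisfy 1 < p < 1 + 1/n. Set Aₙ = (k/x₀)ⁿ − 1 and x(t) = k / (1 + [γ n (p−1)(t−t₀) + Aₙ^{1−p}]^{1/(1−p)})^{1/n}. Then the curve tends to the carrying capacity: lim_{t → ∞} x(t) = k. -/
open Real Filter

/-- For 1 < p < 1 + 1/n, the general growth curve tends to the carrying capacity k. -/
theorem stmt_15 (γ n k x₀ t₀ p : ℝ)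
    (hγ : 0 < γ) (hn : 0 < n) (hk : 0 < k) (hx₀ : 0 < x₀) (hx₀k : x₀ < k)
    (hp1 : 1 < p) (hp2 : p < 1 + 1 / n)
    (A : ℝ) (hA : A = (k / x₀) ^ n - 1)
    (x : ℝ → ℝ)
    (hx : ∀ t, x t =
      k / (1 + (γ * n * (p - 1) * (t - t₀) + A ^ (1 - p)) ^ (1 / (1 - p))) ^ (1 / n)) :
    Tendsto x atTop (nhds k) := by
  have hc : 0 < γ * n * (p - 1) := by
    have : 0 < p - 1 := by linarith
    positivity
  have h1 : Tendsto (fun t => γ * n * (p - 1) * (t - t₀) + A ^ (1 - p)) atTop atTop := by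
    apply tendsto_atTop_add_const_right
    simp only [sub_eq_add_neg]
    exact (tendsto_atTop_add_const_right atTop (-t₀) tendsto_id).const_mul_atTop hc
  have hexp : 1 / (1 - p) = -(1 / (p - 1)) := by
    rw [show (1:ℝ) - p = -(p - 1) by ring, div_neg]
  have h2 : Tendsto (fun t => (γ * n * (p - 1) * (t - t₀) + A ^ (1 - p)) ^ (1 / (1 - p)))
      atTop (nhds 0) := by
    rw [hexp]
    exact (tendsto_rpow_neg_atTop (one_div_pos.mpr (by linarith : (0:ℝ) < p - 1))).comp h1
  have h3 : Tendsto (fun t => (1 + (γ * n * (p - 1) * (t - t₀) + A ^ (1 - p)) ^ (1 / (1 - p))) ^ (1 / n))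
      atTop (nhds 1) := by
    have := ((tendsto_const_nhds (x := (1:ℝ))).add h2).rpow_const (Or.inr (one_div_nonneg.mpr hn.le))
    simpa using this
  have h4 : Tendsto x atTop (nhds (k / 1)) := by
    rw [funext hx]
    exact (tendsto_const_nhds (x := k)).div h3 one_ne_zero
  simpa using h4
end

section
/- Let γ > 0, n > 0, k > 0, 0 < x₀ < k, and let p satisfy 0 < p < 1. Set Aₙ = (k/x₀)ⁿ − 1, x(t) = k / (1 + [γ n (p−1)(t−t₀) + Aₙ^{1−p}]^{1/(1−p)})^{1/n}, and t* = t₀ + Aₙ^{1−p}/(γ n (1−p)). Then the curve reaches the carrying capacity in finite time: x(t*) = k, while x(t) < k for every t with t₀ ≤ t < t*. -/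
open Real

/-- For 0 < p < 1, the general growth curve reaches the carrying capacity k in the finite
time t* = t₀ + Aₙ^{1−p}/(γn(1−p)), staying strictly below k before t*. -/
theorem stmt_16 (γ n k x₀ t₀ p : ℝ)
    (hγ : 0 < γ) (hn : 0 < n) (hk : 0 < k) (hx₀ : 0 < x₀) (hx₀k : x₀ < k)
    (hp0 : 0 < p) (hp1 : p < 1)
    (A : ℝ) (hA : A = (k / x₀) ^ n - 1)
    (x : ℝ → ℝ)
    (hx : ∀ t, x t =
      k / (1 + (γ * n * (p - 1) * (t - t₀) + A ^ (1 - p)) ^ (1 / (1 - p))) ^ (1 / n))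
    (tstar : ℝ) (htstar : tstar = t₀ + A ^ (1 - p) / (γ * n * (1 - p))) :
    x tstar = k ∧ ∀ t, t₀ ≤ t → t < tstar → x t < k := by
  have h1p : 0 < 1 - p := by linarith
  have hγn : 0 < γ * n * (1 - p) := by positivity
  have hA0 : 0 < A := by
    have h1 : 1 < k / x₀ := (one_lt_div hx₀).2 hx₀k
    have h2 : 1 < (k / x₀) ^ n :=
      (Real.one_lt_rpow_iff_of_pos (by positivity)).2 (Or.inl ⟨h1, hn⟩)
    rw [hA]; linarith
  have hAp : 0 < A ^ (1 - p) := Real.rpow_pos_of_pos hA0 _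
  constructor
  · rw [hx, htstar]
    have hz : γ * n * (p - 1) * (t₀ + A ^ (1 - p) / (γ * n * (1 - p)) - t₀) + A ^ (1 - p) = 0 := by
      field_simp
      ring
    rw [hz, Real.zero_rpow (by positivity : (1:ℝ)/(1-p) ≠ 0), add_zero, Real.one_rpow, div_one]
  · intro t ht htf
    rw [hx]
    have hB : 0 < γ * n * (p - 1) * (t - t₀) + A ^ (1 - p) := by
      rw [htstar] at htf
      have : (t - t₀) * (γ * n * (1 - p)) < A ^ (1 - p) := by
        rw [← lt_div_iff₀ hγn]; linarith
      nlinarith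
    have hBp : 0 < (γ * n * (p - 1) * (t - t₀) + A ^ (1 - p)) ^ (1 / (1 - p)) :=
      Real.rpow_pos_of_pos hB _
    have hd : 1 < (1 + (γ * n * (p - 1) * (t - t₀) + A ^ (1 - p)) ^ (1 / (1 - p))) ^ (1 / n) :=
      (Real.one_lt_rpow_iff_of_pos (by linarith)).2 (Or.inl ⟨by linarith, by positivity⟩)
    exact div_lt_self hk hd
end
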